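/- Suppose (m_n) is a strictly increasing sequence of positive integers and (q_k) is a sequence of reals ≥ 1 satisfying q_{m_n + 1} > q_{m_n}^{1+ε} for all n (for some fixed ε > 0) and q_{k+1} ≥ q_k for all k. If q_{m_N} ≥ N^{N log N} for some large N, then q_{m_n} ≥ n^{n log n} for all n ≥ N. -/

import Mathlib

open Real

lemma key_ineq (ε : ℝ) (n : ℕ) (hn3 : 3 ≤ n) (hεn : 7 ≤ ε * n) :
    ((n : ℝ) + 1) * (Real.log ((n : ℝ) + 1)) ^ 2 ≤ (1 + ε) * n * (Real.log n) ^ 2 := by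
  have hx : (3 : ℝ) ≤ (n : ℝ) := by exact_mod_cast hn3
  have hx0 : (0 : ℝ) < n := by linarith
  have hL1 : 1 ≤ Real.log n := by
    have he : Real.exp 1 ≤ (n : ℝ) := by
      have := Real.exp_one_lt_d9; linarith
    calc (1 : ℝ) = Real.log (Real.exp 1) := (Real.log_exp 1).symm
      _ ≤ Real.log n := Real.log_le_log (Real.exp_pos 1) he
  -- log (n+1) ≤ log n + 1/n
  have hlog : Real.log ((n : ℝ) + 1) ≤ Real.log n + 1 / n := by
    have h1 : Real.log ((n : ℝ) + 1) - Real.log n = Real.log (((n : ℝ) + 1) / n) :=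
      (Real.log_div (by linarith) (ne_of_gt hx0)).symm
    have h2 : Real.log (((n : ℝ) + 1) / n) ≤ ((n : ℝ) + 1) / n - 1 :=
      Real.log_le_sub_one_of_pos (by positivity)
    have h3 : ((n : ℝ) + 1) / n - 1 = 1 / n := by field_simp; ring
    linarith
  have hlogpos : 0 ≤ Real.log ((n : ℝ) + 1) := by
    have := Real.log_nonneg (by linarith : (1 : ℝ) ≤ (n : ℝ) + 1); linarith
  have hsq : (Real.log ((n : ℝ) + 1)) ^ 2 ≤ (Real.log n + 1 / n) ^ 2 := by
    apply sq_le_sq' <;> nlinarith [hlogpos, hlog, hL1, one_div_pos.mpr hx0]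
  have hu : (0 : ℝ) < 1 / n := by positivity
  have hu1 : (1 : ℝ) / n ≤ 1 := by
    rw [div_le_one hx0]; linarith
  have hmul : (n : ℝ) * (1 / n) = 1 := by field_simp
  nlinarith [hsq, hL1, hx, hεn, hu, hu1, hmul, sq_nonneg (Real.log n - 1),
    sq_nonneg (Real.log n), mul_pos hx0 hu]

/-- If `q_{m_n+1} > q_{m_n}^{1+ε}` for all `n`, `(q_k)` is nondecreasing and `(m_n)`
strictly increasing, then `q_{m_N} ≥ N^{N log N}` for some large `N` implies
`q_{m_n} ≥ n^{n log n}` for all `n ≥ N`. -/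
theorem denominator_superexp_growth (ε : ℝ) (hε : 0 < ε) :
    ∃ N₀ : ℕ, ∀ (m : ℕ → ℕ) (q : ℕ → ℝ), StrictMono m → (∀ k, 1 ≤ q k) →
      (∀ k, q k ≤ q (k + 1)) →
      (∀ n, q (m n) ^ (1 + ε) < q (m n + 1)) →
      ∀ N : ℕ, N₀ ≤ N → ((N : ℝ) ^ ((N : ℝ) * Real.log N) ≤ q (m N)) →
      ∀ n : ℕ, N ≤ n → (n : ℝ) ^ ((n : ℝ) * Real.log n) ≤ q (m n) := by
  refine ⟨max 3 ⌈7 / ε⌉₊, ?_⟩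
  intro m q hm hq1 hqstep hpow N hN hbase n hn
  have hqmono : Monotone q := monotone_nat_of_le_succ hqstep
  induction n, hn using Nat.le_induction with
  | base => exact hbase
  | succ n hn ih =>
    have hN0 : max 3 ⌈7 / ε⌉₊ ≤ n := le_trans hN hn
    have hn3 : 3 ≤ n := le_trans (le_max_left _ _) hN0
    have hεn : 7 ≤ ε * n := by
      have h1 : (⌈7 / ε⌉₊ : ℕ) ≤ n := le_trans (le_max_right _ _) hN0
      have h2 : (7 / ε : ℝ) ≤ n := le_trans (Nat.le_ceil _) (by exact_mod_cast h1)
      calc (7 : ℝ) = ε * (7 / ε) := by field_simp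
        _ ≤ ε * n := by nlinarith
    have hx : (3 : ℝ) ≤ (n : ℝ) := by exact_mod_cast hn3
    have hx0 : (0 : ℝ) < n := by linarith
    have hlogn : 0 ≤ Real.log n := Real.log_nonneg (by linarith)
    -- monotone chain
    have hmsucc : m n + 1 ≤ m (n + 1) := hm (Nat.lt_succ_self n)
    have hchain : q (m n + 1) ≤ q (m (n + 1)) := hqmono hmsucc
    have hstep : q (m n) ^ (1 + ε) < q (m n + 1) := hpow n
    have hih : ((n : ℝ) ^ ((n : ℝ) * Real.log n)) ^ (1 + ε) ≤ q (m n) ^ (1 + ε) :=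
      Real.rpow_le_rpow (by positivity) ih (by linarith)
    -- key rpow inequality
    have hkey : ((n : ℝ) + 1) ^ (((n : ℝ) + 1) * Real.log ((n : ℝ) + 1))
        ≤ ((n : ℝ) ^ ((n : ℝ) * Real.log n)) ^ (1 + ε) := by
      rw [← Real.rpow_mul (le_of_lt hx0),
        Real.rpow_def_of_pos (by linarith : (0:ℝ) < (n:ℝ)+1), Real.rpow_def_of_pos hx0]
      apply Real.exp_le_exp.mpr
      have hk := key_ineq ε n hn3 hεn
      nlinarith [hk]
    have hgoal : ((n : ℝ) + 1) ^ (((n : ℝ) + 1) * Real.log ((n : ℝ) + 1)) < q (m (n + 1)) := by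
      calc ((n : ℝ) + 1) ^ (((n : ℝ) + 1) * Real.log ((n : ℝ) + 1))
          ≤ ((n : ℝ) ^ ((n : ℝ) * Real.log n)) ^ (1 + ε) := hkey
        _ ≤ q (m n) ^ (1 + ε) := hih
        _ < q (m n + 1) := hstep
        _ ≤ q (m (n + 1)) := hchain
    have : ((n + 1 : ℕ) : ℝ) = (n : ℝ) + 1 := by push_cast; ring
    rw [this]
    exact le_of_lt hgoal
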